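/- Reduction to the leading term: over RCA_0, RT^{!α}_k implies RT^{!lead(α)}_k. Concretely, write α = lead(α) + α'. Given a coloring c of the lead(α)-size subsets of an infinite set X, define d on α-size subsets t of X by d(t) = c(s) where s is the unique lead(α)-size initial segment of t; then for any infinite homogeneous set H for d, with h the α'-size initial segment of H, the set H \ h is an infinite homogeneous set for c. -/

import Mathlib

open Ordinal

/-- `α[s]`: iterate the fundamental sequence `F` along the increasing enumeration of `s`. -/
def ordIter (F : Ordinal → ℕ → Ordinal) (α : Ordinal) (s : Finset ℕ) : Ordinal :=
  (s.sort (· ≤ ·)).foldl F α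

/-- `s` is `α`-large: `α[s] = 0`. -/
def IsLarge (F : Ordinal → ℕ → Ordinal) (α : Ordinal) (s : Finset ℕ) : Prop :=
  ordIter F α s = 0

/-- `s` is exactly `α`-large (`α`-size). -/
def IsSize (F : Ordinal → ℕ → Ordinal) (α : Ordinal) (s : Finset ℕ) : Prop :=
  IsLarge F α s ∧ ∀ h : s.Nonempty, ¬ IsLarge F α (s.erase (s.max' h))

/-- The system of fundamental sequences `F` is nested. -/
def Nested (F : Ordinal → ℕ → Ordinal) : Prop :=
  ∀ (γ β : Ordinal) (n : ℕ), 1 < n → γ < β → ¬ (F β n < γ ∧ F γ n < F β n)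

/-- `t` is an initial segment (prefix) of the finite set `s`. -/
def IsPrefixOf (t s : Finset ℕ) : Prop :=
  t ⊆ s ∧ ∀ x ∈ t, ∀ y ∈ s, y ≤ x → y ∈ t

/-- `h` is an initial segment of the set `H ⊆ ℕ`. -/
def IsPrefixOfSet (h : Finset ℕ) (H : Set ℕ) : Prop :=
  ↑h ⊆ H ∧ ∀ x ∈ h, ∀ y ∈ H, y ≤ x → y ∈ h

/-- `lead α`: the leading term of the Cantor normal form of `α`. -/
noncomputable def lead (α : Ordinal) : Ordinal :=
  Ordinal.omega0 ^ Ordinal.log Ordinal.omega0 α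

/-- `RT^{!α}_k`. -/
def RTsize (F : Ordinal → ℕ → Ordinal) (α : Ordinal) (k : ℕ) : Prop :=
  ∀ X : Set ℕ, X.Infinite → ∀ c : Finset ℕ → Fin k,
    ∃ H : Set ℕ, H ⊆ X ∧ H.Infinite ∧
      ∃ i : Fin k, ∀ s : Finset ℕ, ↑s ⊆ H → IsSize F α s → c s = i

lemma aux_sort_insert_max {a : ℕ} {s : Finset ℕ} (h1 : ∀ b ∈ s, b ≤ a) (h2 : a ∉ s) :
    (insert a s).sort (· ≤ ·) = s.sort (· ≤ ·) ++ [a] := by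
  have hperm : ((insert a s).sort (· ≤ ·)).Perm (s.sort (· ≤ ·) ++ [a]) :=
    ((Finset.sort_perm_toList _ _).trans (Finset.toList_insert h2)).trans
      (((Finset.sort_perm_toList s (· ≤ ·)).symm.cons a).trans
        (List.perm_append_singleton _ _).symm)
  refine List.Perm.eq_of_pairwise' (Finset.pairwise_sort _ _) ?_ hperm
  rw [List.pairwise_append]
  refine ⟨Finset.pairwise_sort _ _, List.pairwise_singleton _ _, ?_⟩
  intro x hx y hy
  simp only [List.mem_singleton] at hy
  subst hy
  exact h1 x (Finset.mem_sort (· ≤ ·) |>.mp hx)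

lemma aux_ordIter_empty (F : Ordinal → ℕ → Ordinal) (β : Ordinal) : ordIter F β ∅ = β := by
  simp [ordIter]

lemma aux_ordIter_insert_max (F : Ordinal → ℕ → Ordinal) (β : Ordinal) {a : ℕ} {s : Finset ℕ}
    (h1 : ∀ b ∈ s, b ≤ a) (h2 : a ∉ s) :
    ordIter F β (insert a s) = F (ordIter F β s) a := by
  unfold ordIter
  rw [aux_sort_insert_max h1 h2, List.foldl_append]
  rfl

/-- Largeness propagates from a prefix to the whole set. -/
lemma aux_large_of_prefix {F : Ordinal → ℕ → Ordinal} (h0 : ∀ n : ℕ, F 0 n = 0)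
    {β : Ordinal} :
    ∀ w v : Finset ℕ, IsPrefixOf v w → IsLarge F β v → IsLarge F β w := by
  intro w
  induction w using Finset.strongInduction with
  | _ w ih =>
    intro v hpre hlarge
    by_cases hvw : w ⊆ v
    · rwa [Finset.Subset.antisymm hpre.1 hvw] at hlarge
    · have hw : w.Nonempty := by
        rcases Finset.eq_empty_or_nonempty w with rfl | h
        · exact absurd (Finset.empty_subset v) hvw
        · exact h
      set m := w.max' hw with hm
      have hmv : m ∉ v := by
        intro hmvmem
        exact hvw fun y hy => hpre.2 m hmvmem y hy (Finset.le_max' w y hy)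
      have hvsub : v ⊆ w.erase m := Finset.subset_erase.mpr ⟨hpre.1, hmv⟩
      have hpre' : IsPrefixOf v (w.erase m) :=
        ⟨hvsub, fun x hx y hy hyx => hpre.2 x hx y (Finset.mem_of_mem_erase hy) hyx⟩
      have hlarge' : IsLarge F β (w.erase m) :=
        ih (w.erase m) (Finset.erase_ssubset (w.max'_mem hw)) v hpre' hlarge
      have : ordIter F β w = F (ordIter F β (w.erase m)) m := by
        conv_lhs => rw [← Finset.insert_erase (w.max'_mem hw)]
        exact aux_ordIter_insert_max F β
          (fun b hb => Finset.le_max' w b (Finset.mem_of_mem_erase hb))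
          (Finset.notMem_erase m w)
      rw [IsLarge, this, hlarge', h0]

/-- Every infinite set has an exactly-`β`-large initial segment. -/
lemma aux_exists_size_prefix {F : Ordinal → ℕ → Ordinal}
    (hself : ∀ (γ : Ordinal) (n : ℕ), γ ≠ 0 → F γ n < γ)
    (β : Ordinal) (S : Set ℕ) (hS : S.Infinite) :
    ∃ u : Finset ℕ, IsPrefixOfSet u S ∧ IsSize F β u := by
  classical
  have hS' : (setOf (· ∈ S)).Infinite := by exact hS
  set nth : ℕ → ℕ := Nat.nth (· ∈ S) with hnth
  have hmono : StrictMono nth := Nat.nth_strictMono hS'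
  set g : ℕ → Ordinal := fun n => Nat.rec β (fun n ih => F ih (nth n)) n with hg
  set u : ℕ → Finset ℕ := fun n => (Finset.range n).image nth with hu
  have hnotmem : ∀ n : ℕ, nth n ∉ u n := by
    intro n hmem
    simp only [hu, Finset.mem_image, Finset.mem_range] at hmem
    obtain ⟨i, hi, heq⟩ := hmem
    exact absurd (hmono.injective heq) (Nat.ne_of_lt hi)
  have hle : ∀ n : ℕ, ∀ b ∈ u n, b ≤ nth n := by
    intro n b hb
    simp only [hu, Finset.mem_image, Finset.mem_range] at hb
    obtain ⟨i, hi, rfl⟩ := hb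
    exact (hmono.le_iff_le.mpr (Nat.le_of_lt hi))
  have husucc : ∀ n : ℕ, u (n + 1) = insert (nth n) (u n) := by
    intro n
    simp [hu, Finset.range_add_one, Finset.image_insert]
  have hiter : ∀ n : ℕ, ordIter F β (u n) = g n := by
    intro n
    induction n with
    | zero => simpa [hu, hg] using aux_ordIter_empty F β
    | succ n ihn =>
      rw [husucc n, aux_ordIter_insert_max F β (hle n) (hnotmem n), ihn]
  have hex : ∃ n, g n = 0 := by
    by_contra hne
    push_neg at hne
    have hdec : ∀ n, g (n + 1) < g n := fun n => hself (g n) (nth n) (hne n)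
    obtain ⟨m, hmmem, hmin⟩ := wellFounded_lt.has_min (Set.range g) ⟨g 0, 0, rfl⟩
    obtain ⟨n, rfl⟩ := hmmem
    exact hmin (g (n + 1)) ⟨n + 1, rfl⟩ (hdec n)
  obtain ⟨N, hgN, hNmin⟩ : ∃ N, g N = 0 ∧ ∀ m < N, g m ≠ 0 :=
    ⟨Nat.find hex, Nat.find_spec hex, fun m hm => Nat.find_min hex hm⟩
  refine ⟨u N, ⟨?_, ?_⟩, ?_, ?_⟩
  · intro x hx
    simp only [hu, Finset.coe_image, Set.mem_image, Finset.mem_coe, Finset.mem_range] at hx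
    obtain ⟨i, _, rfl⟩ := hx
    exact Nat.nth_mem_of_infinite hS' i
  · intro x hx y hyS hyx
    simp only [hu, Finset.mem_image, Finset.mem_range] at hx ⊢
    obtain ⟨i, hi, rfl⟩ := hx
    have hcount : nth (Nat.count (· ∈ S) y) = y := Nat.nth_count (p := (· ∈ S)) hyS
    refine ⟨Nat.count (· ∈ S) y, ?_, hcount⟩
    have h2 : nth (Nat.count (· ∈ S) y) ≤ nth i := by rw [hcount]; exact hyx
    exact lt_of_le_of_lt (hmono.le_iff_le.mp h2) hi
  · exact (hiter N).trans hgN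
  · intro hne
    have hN0 : N ≠ 0 := by
      intro h
      rw [h] at hne
      simp [hu] at hne
    obtain ⟨M, rfl⟩ : ∃ M, N = M + 1 := Nat.exists_eq_succ_of_ne_zero hN0
    have hmax : (u (M + 1)).max' hne = nth M := by
      apply le_antisymm
      · apply Finset.max'_le
        intro y hy
        rw [husucc M] at hy
        rcases Finset.mem_insert.mp hy with rfl | hy
        · exact le_refl _
        · exact hle M y hy
      · apply Finset.le_max'
        rw [husucc M]
        exact Finset.mem_insert_self _ _
    have herase : (u (M + 1)).erase ((u (M + 1)).max' hne) = u M := by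
      rw [hmax, husucc M, Finset.erase_insert (hnotmem M)]
    rw [herase, IsLarge, hiter M]
    exact hNmin M (Nat.lt_succ_self M)

lemma aux_key {F : Ordinal → ℕ → Ordinal}
    (h0 : ∀ n : ℕ, F 0 n = 0)
    (hself : ∀ (γ : Ordinal) (n : ℕ), γ ≠ 0 → F γ n < γ)
    {α : Ordinal}
    (hpref : ∀ s : Finset ℕ, IsSize F α s →
      ∃! t : Finset ℕ, IsPrefixOf t s ∧ IsSize F (lead α) t)
    {k : ℕ}
    (X : Set ℕ) (c d : Finset ℕ → Fin k)
    (hcd : ∀ s : Finset ℕ, ↑s ⊆ X → IsSize F α s →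
        ∀ t : Finset ℕ, IsPrefixOf t s → IsSize F (lead α) t → d s = c t)
    (H : Set ℕ) (hHX : H ⊆ X) (hHinf : H.Infinite)
    (hom : ∃ i : Fin k, ∀ s : Finset ℕ, ↑s ⊆ H → IsSize F α s → d s = i)
    (h : Finset ℕ) :
    (H \ ↑h).Infinite ∧
    ∃ i : Fin k, ∀ t : Finset ℕ, ↑t ⊆ H \ ↑h → IsSize F (lead α) t → c t = i := by
  constructor
  · exact hHinf.diff h.finite_toSet
  · obtain ⟨i, hi⟩ := hom
    refine ⟨i, fun t ht htsize => ?_⟩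
    have htH : ↑t ⊆ H := fun x hx => (ht hx).1
    set S' : Set ℕ := ↑t ∪ {x | x ∈ H ∧ ∀ y ∈ t, y < x} with hS'
    have hS'H : S' ⊆ H := by
      rintro x (hx | hx)
      · exact htH hx
      · exact hx.1
    have hS'inf : S'.Infinite := by
      refine (hHinf.diff (Set.finite_Iic (t.sup id))).mono ?_
      rintro x ⟨hxH, hx⟩
      refine Set.mem_union_right _ ⟨hxH, fun y hy => ?_⟩
      have h1 : y ≤ t.sup id := Finset.le_sup (f := id) hy
      have h2 : ¬ x ≤ t.sup id := hx
      omega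
    have htpre : IsPrefixOfSet t S' := by
      refine ⟨Set.subset_union_left, fun x hx y hy hyx => ?_⟩
      rcases hy with hy | hy
      · exact hy
      · exact absurd hyx (not_le.mpr (hy.2 x hx))
    obtain ⟨u, hupre, husize⟩ := aux_exists_size_prefix hself α S' hS'inf
    by_cases htu : t ⊆ u
    · have htprefu : IsPrefixOf t u :=
        ⟨htu, fun x hx y hy hyx => htpre.2 x hx y (hupre.1 hy) hyx⟩
      have huH : ↑u ⊆ H := fun x hx => hS'H (hupre.1 hx)
      have h1 : d u = c t := hcd u (fun x hx => hHX (huH hx)) husize t htprefu htsize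
      have h2 : d u = i := hi u huH husize
      rw [← h1, h2]
    · exfalso
      have hut : u ⊆ t := by
        by_contra hut
        apply htu
        obtain ⟨x, hxu, hxt⟩ := Finset.not_subset.mp hut
        intro y hy
        rcases le_or_gt y x with hle | hlt
        · exact hupre.2 x hxu y (htpre.1 hy) hle
        · exact absurd (htpre.2 y hy x (hupre.1 hxu) (le_of_lt hlt)) hxt
      have htne : t.Nonempty := by
        rcases Finset.eq_empty_or_nonempty t with rfl | h'
        · exfalso
          have h1 : ordIter F (lead α) ∅ = 0 := htsize.1
          rw [aux_ordIter_empty] at h1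
          have h2 : (0 : Ordinal) < lead α :=
            Ordinal.opow_pos (Ordinal.log Ordinal.omega0 α) Ordinal.omega0_pos
          exact absurd h1 (ne_of_gt h2)
        · exact h'
      have hmu : t.max' htne ∉ u := by
        intro hmu
        exact htu fun y hy => hupre.2 _ hmu y (htpre.1 hy) (Finset.le_max' t y hy)
      obtain ⟨v, ⟨hvprefu, hvsize⟩, -⟩ := hpref u husize
      have hvt : v ⊆ t.erase (t.max' htne) := Finset.subset_erase.mpr
        ⟨fun x hx => hut (hvprefu.1 hx), fun hmv => hmu (hvprefu.1 hmv)⟩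
      have hvpre : IsPrefixOf v (t.erase (t.max' htne)) := by
        refine ⟨hvt, fun x hx y hy hyx => ?_⟩
        have hyt : y ∈ t := Finset.mem_of_mem_erase hy
        have hyu : y ∈ u := hupre.2 x (hvprefu.1 hx) y (htpre.1 hyt) hyx
        exact hvprefu.2 x hx y hyu hyx
      exact absurd (aux_large_of_prefix h0 (t.erase (t.max' htne)) v hvpre hvsize.1)
        (htsize.2 htne)


/-- Reduction to the leading term: `RT^{!α}_k` implies `RT^{!lead(α)}_k`; concretely,
writing `α = lead(α) + α'`, for any coloring `c` of the `lead(α)`-size subsets of an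
infinite `X` and any coloring `d` of `α`-size sets agreeing with `c` on unique
`lead(α)`-size initial segments, if `H` is an infinite homogeneous set for `d` and `h`
is the `α'`-size initial segment of `H`, then `H \ h` is an infinite homogeneous set
for `c`. -/
theorem rt_lead_reduction
    (F : Ordinal → ℕ → Ordinal)
    (h0 : ∀ n : ℕ, F 0 n = 0)
    (hsucc : ∀ (α : Ordinal) (n : ℕ), F (α + 1) n = α)
    (hself : ∀ (α : Ordinal) (n : ℕ), α ≠ 0 → F α n < α)
    (hnested : Nested F)
    (α α' : Ordinal) (hdec : α = lead α + α')
    (hpref : ∀ s : Finset ℕ, IsSize F α s →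
      ∃! t : Finset ℕ, IsPrefixOf t s ∧ IsSize F (lead α) t)
    (k : ℕ) (hk : 1 ≤ k) :
    (RTsize F α k → RTsize F (lead α) k) ∧
    (∀ X : Set ℕ, X.Infinite → ∀ c d : Finset ℕ → Fin k,
      (∀ s : Finset ℕ, ↑s ⊆ X → IsSize F α s →
        ∀ t : Finset ℕ, IsPrefixOf t s → IsSize F (lead α) t → d s = c t) →
      ∀ H : Set ℕ, H ⊆ X → H.Infinite →
        (∃ i : Fin k, ∀ s : Finset ℕ, ↑s ⊆ H → IsSize F α s → d s = i) →
        ∀ h : Finset ℕ, IsPrefixOfSet h H → IsSize F α' h →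
          (H \ ↑h).Infinite ∧
          ∃ i : Fin k, ∀ t : Finset ℕ, ↑t ⊆ H \ ↑h → IsSize F (lead α) t → c t = i) := by
  constructor
  · intro hRT X hX c
    classical
    set d : Finset ℕ → Fin k :=
      fun s => if hs : IsSize F α s then c (hpref s hs).choose else ⟨0, hk⟩ with hd
    have hcd : ∀ s : Finset ℕ, ↑s ⊆ X → IsSize F α s →
        ∀ t : Finset ℕ, IsPrefixOf t s → IsSize F (lead α) t → d s = c t := by
      intro s _ hs t hts htsz
      have heq : t = (hpref s hs).choose := (hpref s hs).choose_spec.2 t ⟨hts, htsz⟩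
      simp only [hd, dif_pos hs, heq]
    obtain ⟨H, hHX, hHinf, i, hi⟩ := hRT X hX d
    obtain ⟨h, hhpre, hhsize⟩ := aux_exists_size_prefix hself α' H hHinf
    obtain ⟨hinf, i', hi'⟩ :=
      aux_key h0 hself hpref X c d hcd H hHX hHinf ⟨i, hi⟩ h
    exact ⟨H \ ↑h, (Set.diff_subset).trans hHX, hinf, i', hi'⟩
  · intro X hX c d hcd H hHX hHinf hom h _ _
    exact aux_key h0 hself hpref X c d hcd H hHX hHinf hom h
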